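/- arXiv:1503.07201 — 2 statements merged into one kernel-verified Lean document; each statement's English description precedes it below -/
import Mathlib

section
/- Let K ⊂ ℝ² be compact with d = diam(K) > 0. Let a : ℝ² → ℝ be measurable and bounded with a(y) = 0 for y ∉ K. Let α ∈ (0,1] and let f : ℝ² → ℝ satisfy: f has finite positive Hölder seminorm |f|_{C^α}, f ≥ 0 everywhere, f is not identically zero, and f(y) = 0 for y ∉ K. Then for every x ∈ K, M[a,f](x) ≥ (π / (2^{1+2/α} d)) · e^{−d‖a‖_∞} · (‖f‖_∞ / |f|_{C^α})^{2/α} · ‖f‖_∞. In particular M[a,f] is bounded below on K by a positive constant, so 1/M[a,f] is bounded on K. -/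
open MeasureTheory Real Set
open scoped ENNReal

/-- The unit direction vector in `ℝ²` with angle `φ`; integrating over `φ ∈ (0, 2π]`
realizes integration over the unit circle `S¹` with its arclength measure. -/
noncomputable def dir (φ : ℝ) : EuclideanSpace ℝ (Fin 2) :=
  (WithLp.equiv 2 (Fin 2 → ℝ)).symm ![Real.cos φ, Real.sin φ]

/-- The averaging operator
`M[a,f](x) = ∫_{S¹} ∫₀^∞ f(x+tθ) exp(−∫₀^t a(x+sθ) ds) dt dθ`,
here as a lower Lebesgue integral (the integrand is nonnegative when `f ≥ 0`). -/
noncomputable def Mop (a f : EuclideanSpace ℝ (Fin 2) → ℝ)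
    (x : EuclideanSpace ℝ (Fin 2)) : ℝ≥0∞ :=
  ∫⁻ φ in Set.Ioc 0 (2 * π), ∫⁻ t in Set.Ioi (0 : ℝ),
    ENNReal.ofReal (f (x + t • dir φ) * Real.exp (-∫ s in (0:ℝ)..t, a (x + s • dir φ)))

section aux

lemma angle_key : ∀ θ ∈ Ioc 0 (2*π), Complex.arg (Real.cos θ + Real.sin θ * Complex.I)
    = if θ ≤ π then θ else θ - 2*π := by
  intro θ hθ
  by_cases h : θ ≤ π
  · rw [if_pos h, Complex.ofReal_cos, Complex.ofReal_sin]
    exact Complex.arg_cos_add_sin_mul_I ⟨by linarith [hθ.1, pi_pos], h⟩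
  · rw [if_neg h]
    have h1 : Real.cos θ = Real.cos (θ - 2*π) := (Real.cos_sub_two_pi θ).symm
    have h2 : Real.sin θ = Real.sin (θ - 2*π) := (Real.sin_sub_two_pi θ).symm
    rw [h1, h2, Complex.ofReal_cos, Complex.ofReal_sin]
    exact Complex.arg_cos_add_sin_mul_I ⟨by linarith [hθ.2, pi_pos], by linarith [hθ.2, pi_pos, not_le.1 h]⟩

lemma angle_inj : ∀ φ ∈ Ioc 0 (2*π), ∀ ψ ∈ Ioc 0 (2*π),
    Real.cos φ = Real.cos ψ → Real.sin φ = Real.sin ψ → φ = ψ := by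
  intro φ hφ ψ hψ hc hs
  have := angle_key φ hφ
  rw [hc, hs, angle_key ψ hψ] at this
  by_cases h1 : φ ≤ π <;> by_cases h2 : ψ ≤ π <;>
    simp only [if_pos, if_neg, h1, h2, if_true, if_false] at this <;>
    first
    | exact this
    | linarith [hφ.1, hψ.1, hφ.2, hψ.2, pi_pos]

lemma polar_symm_apply (p : ℝ × ℝ) :
    (polarCoord.symm p : ℝ × ℝ) = (p.1 * Real.cos p.2, p.1 * Real.sin p.2) := rfl

lemma polar_inj : InjOn (⇑polarCoord.symm) (Ioi (0:ℝ) ×ˢ Ioc 0 (2*π)) := by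
  rintro ⟨t, φ⟩ ⟨ht, hφ⟩ ⟨u, ψ⟩ ⟨hu, hψ⟩ h
  simp only [polar_symm_apply, Prod.mk.injEq] at h
  simp only [mem_Ioi] at ht hu
  have hsq : t ^ 2 = u ^ 2 := by
    have e1 : (t * Real.cos φ)^2 + (t * Real.sin φ)^2 = t^2 := by
      nlinarith [Real.sin_sq_add_cos_sq φ]
    have e2 : (u * Real.cos ψ)^2 + (u * Real.sin ψ)^2 = u^2 := by
      nlinarith [Real.sin_sq_add_cos_sq ψ]
    rw [← e1, ← e2, h.1, h.2]
  have htu : t = u := by nlinarith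
  subst htu
  have hc : Real.cos φ = Real.cos ψ := mul_left_cancel₀ (ne_of_gt ht) h.1
  have hs : Real.sin φ = Real.sin ψ := mul_left_cancel₀ (ne_of_gt ht) h.2
  exact Prod.ext rfl (angle_inj φ hφ ψ hψ hc hs)

lemma polar_surj {q : ℝ × ℝ} (hq : q ≠ 0) :
    q ∈ ⇑polarCoord.symm '' (Ioi (0:ℝ) ×ˢ Ioc 0 (2*π)) := by
  set w : ℂ := Complex.equivRealProd.symm q with hw
  have hw0 : w ≠ 0 := by
    simp only [hw, ne_eq, Complex.equivRealProd_symm_apply]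
    intro h
    apply hq
    have hre := congrArg Complex.re h
    have him := congrArg Complex.im h
    simp at hre him
    exact Prod.ext hre him
  have habs : 0 < ‖w‖ := norm_pos_iff.mpr hw0
  have hre : w.re = q.1 := by simp [hw, Complex.equivRealProd_symm_apply]
  have him : w.im = q.2 := by simp [hw, Complex.equivRealProd_symm_apply]
  have hcos : Real.cos w.arg = q.1 / ‖w‖ := by rw [← hre]; exact Complex.cos_arg hw0
  have hsin : Real.sin w.arg = q.2 / ‖w‖ := by rw [← him]; exact Complex.sin_arg w
  have harg1 : -π < w.arg := Complex.neg_pi_lt_arg w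
  have harg2 : w.arg ≤ π := Complex.arg_le_pi w
  refine ⟨(‖w‖, if 0 < w.arg then w.arg else w.arg + 2*π), ⟨habs, ?_⟩, ?_⟩
  · by_cases h : 0 < w.arg
    · rw [if_pos h]; exact ⟨h, by linarith [pi_pos]⟩
    · rw [if_neg h]; push_neg at h
      show w.arg + 2*π ∈ Ioc 0 (2*π)
      rw [Set.mem_Ioc]
      constructor <;> linarith [pi_pos]
  · have hc2 : Real.cos (if 0 < w.arg then w.arg else w.arg + 2*π) = Real.cos w.arg := by
      by_cases h : 0 < w.arg
      · rw [if_pos h]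
      · rw [if_neg h, Real.cos_add_two_pi]
    have hs2 : Real.sin (if 0 < w.arg then w.arg else w.arg + 2*π) = Real.sin w.arg := by
      by_cases h : 0 < w.arg
      · rw [if_pos h]
      · rw [if_neg h, Real.sin_add_two_pi]
    rw [polar_symm_apply]
    simp only [hc2, hs2, hcos, hsin]
    have h1 : ‖w‖ * (q.1 / ‖w‖) = q.1 := by field_simp
    have h2 : ‖w‖ * (q.2 / ‖w‖) = q.2 := by field_simp
    rw [h1, h2]

lemma lintegral_polar_le (g : ℝ × ℝ → ℝ≥0∞) :
    ∫⁻ q, g q ≤ ∫⁻ p in Ioi (0:ℝ) ×ˢ Ioc 0 (2*π), ENNReal.ofReal p.1 * g (polarCoord.symm p) := by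
  set s : Set (ℝ × ℝ) := Ioi (0:ℝ) ×ˢ Ioc 0 (2*π) with hs_def
  have hs : MeasurableSet s := measurableSet_Ioi.prod measurableSet_Ioc
  set B : ℝ × ℝ → ℝ × ℝ →L[ℝ] ℝ × ℝ := fun p =>
    LinearMap.toContinuousLinearMap (Matrix.toLin (Module.Basis.finTwoProd ℝ) (Module.Basis.finTwoProd ℝ)
      !![Real.cos p.2, -p.1 * Real.sin p.2; Real.sin p.2, p.1 * Real.cos p.2]) with hB
  have hder : ∀ p ∈ s, HasFDerivWithinAt (⇑polarCoord.symm) (B p) s p := fun p _ =>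
    (hasFDerivAt_polarCoord_symm p).hasFDerivWithinAt
  have hBdet : ∀ p, (B p).det = p.1 := by
    intro p
    conv_rhs => rw [← one_mul p.1, ← Real.cos_sq_add_sin_sq p.2]
    simp only [hB, neg_mul, LinearMap.det_toContinuousLinearMap, LinearMap.det_toLin,
      Matrix.det_fin_two_of, sub_neg_eq_add]
    ring
  have hnull : (univ : Set (ℝ × ℝ)) =ᵐ[volume] ({((0:ℝ),(0:ℝ))}ᶜ : Set (ℝ × ℝ)) := by
    symm
    rw [ae_eq_univ, compl_compl]
    have : ({((0:ℝ),(0:ℝ))} : Set (ℝ × ℝ)) = {(0:ℝ)} ×ˢ {(0:ℝ)} := by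
      ext p; simp [Prod.ext_iff]
    rw [Measure.volume_eq_prod, this, Measure.prod_prod]
    simp [Real.volume_singleton]
  calc ∫⁻ q, g q = ∫⁻ q in ({((0:ℝ),(0:ℝ))}ᶜ : Set (ℝ × ℝ)), g q := by
        rw [← setLIntegral_univ]; exact setLIntegral_congr hnull
    _ ≤ ∫⁻ q in ⇑polarCoord.symm '' s, g q := by
        apply lintegral_mono_set
        intro q hq
        exact polar_surj hq
    _ = ∫⁻ p in s, ENNReal.ofReal |(B p).det| * g (polarCoord.symm p) :=
        lintegral_image_eq_lintegral_abs_det_fderiv_mul volume hs hder polar_inj g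
    _ = ∫⁻ p in s, ENNReal.ofReal p.1 * g (polarCoord.symm p) := by
        apply setLIntegral_congr_fun hs (fun p hp => ?_)
        rw [hBdet, abs_of_pos hp.1]

lemma norm_dir (φ : ℝ) : ‖dir φ‖ = 1 := by
  rw [EuclideanSpace.norm_eq]
  simp only [dir, WithLp.equiv_symm_apply, WithLp.ofLp_toLp, Fin.sum_univ_two]
  rw [show ‖![Real.cos φ, Real.sin φ] 0‖ ^ 2 + ‖![Real.cos φ, Real.sin φ] 1‖ ^ 2 = 1 by
    simp [Real.norm_eq_abs, sq_abs]]
  exact Real.sqrt_one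

noncomputable def Tmap (q : ℝ × ℝ) : EuclideanSpace ℝ (Fin 2) :=
  (MeasurableEquiv.toLp 2 (Fin 2 → ℝ)) (MeasurableEquiv.finTwoArrow.symm q)

lemma Tmap_meas : Measurable Tmap :=
  (MeasurableEquiv.toLp 2 (Fin 2 → ℝ)).measurable.comp
    MeasurableEquiv.finTwoArrow.symm.measurable

lemma Tmap_mp : MeasurePreserving Tmap volume volume :=
  ((EuclideanSpace.volume_preserving_symm_measurableEquiv_toLp (Fin 2)).symm).comp
    ((volume_preserving_finTwoArrow ℝ).symm)

lemma Tmap_polar (t φ : ℝ) : Tmap (polarCoord.symm (t, φ)) = t • dir φ := by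
  unfold Tmap
  rw [MeasurableEquiv.coe_toLp, ← WithLp.equiv_symm_apply]
  apply (WithLp.equiv 2 (Fin 2 → ℝ)).injective
  rw [Equiv.apply_symm_apply]
  funext i
  have h : (WithLp.equiv 2 (Fin 2 → ℝ)) (t • dir φ) i = t * (![Real.cos φ, Real.sin φ] i) := by
    simp [dir]
  rw [h]
  fin_cases i <;>
    simp [MeasurableEquiv.finTwoArrow, polarCoord]

lemma ball_vol (z : EuclideanSpace ℝ (Fin 2)) (r : ℝ) (hr : 0 ≤ r) :
    volume (Metric.ball z r) = ENNReal.ofReal (π * r ^ 2) := by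
  rw [EuclideanSpace.volume_ball]
  simp only [Fintype.card_fin]
  rw [show ((2:ℕ):ℝ)/2 + 1 = 2 by norm_num, Real.Gamma_two]
  rw [ENNReal.ofReal_mul (by positivity), ← ENNReal.ofReal_pow hr]
  rw [sq_sqrt pi_pos.le]
  ring_nf

end aux

/-- Lower bound for `M[a,f]` on `K`:
`M[a,f](x) ≥ (π / (2^{1+2/α} d)) e^{−d‖a‖_∞} (‖f‖_∞/|f|_{C^α})^{2/α} ‖f‖_∞` for `x ∈ K`. -/
theorem stmt2 (K : Set (EuclideanSpace ℝ (Fin 2))) (hK : IsCompact K)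
    (d : ℝ) (hd : Metric.diam K = d) (hdpos : 0 < d)
    (a : EuclideanSpace ℝ (Fin 2) → ℝ) (hameas : Measurable a)
    -- `A = ‖a‖_∞`, in particular `a` is bounded
    (A : ℝ) (hA : IsLUB (Set.range fun y => |a y|) A)
    (hasupp : ∀ y ∉ K, a y = 0)
    (α : ℝ) (hα0 : 0 < α) (hα1 : α ≤ 1)
    (f : EuclideanSpace ℝ (Fin 2) → ℝ)
    -- `Hα = |f|_{C^α}` is the Hölder seminorm of `f`, finite and positive
    (Hα : ℝ) (hHα : IsLUB {r : ℝ | ∃ x y : EuclideanSpace ℝ (Fin 2),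
      x ≠ y ∧ r = |f x - f y| / dist x y ^ α} Hα)
    (hHαpos : 0 < Hα)
    (hf0 : ∀ y, 0 ≤ f y) (hfne : f ≠ 0) (hfsupp : ∀ y ∉ K, f y = 0)
    -- `F = ‖f‖_∞`
    (F : ℝ) (hF : IsLUB (Set.range f) F) :
    ∀ x ∈ K,
      ENNReal.ofReal (π / ((2:ℝ) ^ (1 + 2 / α) * d) * Real.exp (-(d * A)) *
        (F / Hα) ^ (2 / α) * F) ≤ Mop a f x := by
  intro x hx
  -- Hölder bound
  have hHol : ∀ u v, |f u - f v| ≤ Hα * dist u v ^ α := by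
    intro u v
    rcases eq_or_ne u v with rfl | hne
    · simp only [sub_self, abs_zero]
      positivity
    · have hmem : |f u - f v| / dist u v ^ α ∈ {r : ℝ | ∃ x y : EuclideanSpace ℝ (Fin 2),
          x ≠ y ∧ r = |f x - f y| / dist x y ^ α} := ⟨u, v, hne, rfl⟩
      have := hHα.1 hmem
      have hdp : (0:ℝ) < dist u v ^ α := Real.rpow_pos_of_pos (dist_pos.2 hne) α
      calc |f u - f v| = |f u - f v| / dist u v ^ α * dist u v ^ α := by field_simp
        _ ≤ Hα * dist u v ^ α := mul_le_mul_of_nonneg_right this hdp.le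
  -- continuity
  have hcont : Continuous f := by
    rw [Metric.continuous_iff]
    intro b ε hε
    refine ⟨(ε/(2*Hα))^(1/α), Real.rpow_pos_of_pos (by positivity) _, fun c hc => ?_⟩
    have h1 : dist (f c) (f b) ≤ Hα * dist c b ^ α := by
      rw [Real.dist_eq]; exact hHol c b
    have h2 : dist c b ^ α ≤ ((ε/(2*Hα))^(1/α)) ^ α :=
      Real.rpow_le_rpow dist_nonneg hc.le hα0.le
    have h3 : ((ε/(2*Hα))^(1/α) : ℝ) ^ α = ε/(2*Hα) := by
      rw [← Real.rpow_mul (by positivity), one_div, inv_mul_cancel₀ hα0.ne', Real.rpow_one]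
    have h4 : Hα * (ε/(2*Hα)) = ε/2 := by field_simp
    calc dist (f c) (f b) ≤ Hα * dist c b ^ α := h1
      _ ≤ Hα * (ε/(2*Hα)) := by rw [← h3]; exact mul_le_mul_of_nonneg_left h2 hHαpos.le
      _ = ε/2 := h4
      _ < ε := by linarith
  -- maximum point
  obtain ⟨y0, hy0⟩ : ∃ y, f y ≠ 0 := by
    by_contra h; push_neg at h; exact hfne (funext h)
  have hy0pos : 0 < f y0 := (hf0 y0).lt_of_ne (Ne.symm hy0)
  have hy0K : y0 ∈ K := by
    by_contra h; rw [hfsupp y0 h] at hy0pos; exact lt_irrefl 0 hy0pos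
  obtain ⟨z, hzK, hzmax'⟩ := hK.exists_isMaxOn ⟨y0, hy0K⟩ hcont.continuousOn
  have hzmax : ∀ y ∈ K, f y ≤ f z := fun y hy => hzmax' hy
  have hub : ∀ y, f y ≤ f z := by
    intro y
    by_cases hy : y ∈ K
    · exact hzmax y hy
    · rw [hfsupp y hy]; exact hf0 z
  have hzF : f z = F := le_antisymm (hF.1 ⟨z, rfl⟩) (hF.2 (by rintro _ ⟨y, rfl⟩; exact hub y))
  have hFpos : 0 < F := hzF ▸ lt_of_lt_of_le hy0pos (hzmax y0 hy0K)
  have hA0 : 0 ≤ A := le_trans (abs_nonneg _) (hA.1 ⟨y0, rfl⟩)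
  -- radius
  have hbase : (0:ℝ) < F / (2*Hα) := by positivity
  set r : ℝ := (F/(2*Hα))^(1/α) with hr_def
  have hrpos : 0 < r := Real.rpow_pos_of_pos hbase _
  have hralpha : r ^ α = F/(2*Hα) := by
    rw [hr_def, ← Real.rpow_mul hbase.le, one_div, inv_mul_cancel₀ hα0.ne', Real.rpow_one]
  have hfball : ∀ y ∈ Metric.ball z r, F/2 ≤ f y := by
    intro y hy
    have h1 : f z - f y ≤ |f z - f y| := le_abs_self _
    have h2 : |f z - f y| ≤ Hα * dist z y ^ α := hHol z y
    have h3 : dist z y ^ α ≤ r ^ α := by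
      apply Real.rpow_le_rpow dist_nonneg _ hα0.le
      rw [dist_comm]; exact (Metric.mem_ball.1 hy).le
    have h4 : Hα * (F/(2*Hα)) = F/2 := by field_simp
    have h5 : Hα * dist z y ^ α ≤ F/2 := by
      rw [← h4, ← hralpha]; exact mul_le_mul_of_nonneg_left h3 hHαpos.le
    have := hzF
    linarith
  have hballK : Metric.ball z r ⊆ K := by
    intro y hy
    by_contra h
    have h1 := hfsupp y h
    have h2 := hfball y hy
    rw [h1] at h2
    linarith
  -- distance along ray
  have hdist : ∀ (φ : ℝ) (s : ℝ), 0 ≤ s → dist x (x + s • dir φ) = s := by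
    intro φ s hs
    rw [dist_self_add_right, norm_smul, norm_dir, mul_one, Real.norm_eq_abs, abs_of_nonneg hs]
  -- exponent bound
  have hexp : ∀ (φ : ℝ) (t : ℝ), 0 < t → (∫ s in (0:ℝ)..t, a (x + s • dir φ)) ≤ d * A := by
    intro φ t ht
    set g : ℝ → ℝ := fun s => a (x + s • dir φ) with hg_def
    have hgm : Measurable g :=
      hameas.comp (measurable_const.add (measurable_id.smul_const (dir φ)))
    have habs : ∀ s, |g s| ≤ A := fun s => hA.1 ⟨x + s • dir φ, rfl⟩
    have hgint : ∀ b c : ℝ, IntervalIntegrable g volume b c := by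
      intro b c
      rw [intervalIntegrable_iff]
      apply Measure.integrableOn_of_bounded (M := A)
      · rw [Set.uIoc]; exact measure_Ioc_lt_top.ne
      · exact hgm.aestronglyMeasurable
      · exact ae_of_all _ fun s => by rw [Real.norm_eq_abs]; exact habs s
    have hbound : ∀ b c : ℝ, b ≤ c → 0 ≤ b → (∫ s in b..c, g s) ≤ A * (c - b) := by
      intro b c hbc hb
      have := intervalIntegral.norm_integral_le_of_norm_le_const
        (C := A) (a := b) (b := c) (f := g) (fun s _ => by rw [Real.norm_eq_abs]; exact habs s)
      rw [Real.norm_eq_abs, abs_of_nonneg (by linarith : (0:ℝ) ≤ c - b)] at this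
      calc (∫ s in b..c, g s) ≤ |∫ s in b..c, g s| := le_abs_self _
        _ ≤ A * (c - b) := this
    rcases le_or_gt t d with htd | htd
    · calc (∫ s in (0:ℝ)..t, g s) ≤ A * (t - 0) := hbound 0 t ht.le le_rfl
        _ ≤ d * A := by nlinarith
    · have hzero : (∫ s in d..t, g s) = 0 := by
        rw [intervalIntegral.integral_of_le htd.le]
        apply setIntegral_eq_zero_of_forall_eq_zero
        intro s hs
        have hs1 : d < s := hs.1
        have hnotK : x + s • dir φ ∉ K := by
          intro hmem
          have := Metric.dist_le_diam_of_mem hK.isBounded hx hmem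
          rw [hdist φ s (by linarith), hd] at this
          linarith
        exact hasupp _ hnotK
      have hsplit := intervalIntegral.integral_add_adjacent_intervals (hgint 0 d) (hgint d t)
      rw [← hsplit, hzero, add_zero]
      calc (∫ s in (0:ℝ)..d, g s) ≤ A * (d - 0) := hbound 0 d hdpos.le le_rfl
        _ = d * A := by ring
  -- the indicator function
  set χ : EuclideanSpace ℝ (Fin 2) → ℝ≥0∞ := (Metric.ball z r).indicator 1 with hχ_def
  have hχmeas : Measurable χ := measurable_one.indicator Metric.isOpen_ball.measurableSet
  set C : ℝ≥0∞ := ENNReal.ofReal (F/2 * Real.exp (-(d*A))) with hC_def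
  set J : ℝ≥0∞ := ∫⁻ φ in Ioc 0 (2*π), ∫⁻ t in Ioi (0:ℝ), χ (x + t • dir φ) with hJ_def
  -- pointwise bound
  have hpt : ∀ (φ : ℝ), ∀ t ∈ Ioi (0:ℝ), C * χ (x + t • dir φ) ≤
      ENNReal.ofReal (f (x + t • dir φ) * Real.exp (-∫ s in (0:ℝ)..t, a (x + s • dir φ))) := by
    intro φ t ht
    by_cases hy : x + t • dir φ ∈ Metric.ball z r
    · rw [hχ_def, indicator_of_mem hy, Pi.one_apply, mul_one, hC_def]
      apply ENNReal.ofReal_le_ofReal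
      apply mul_le_mul (hfball _ hy) _ (Real.exp_pos _).le (hf0 _)
      exact Real.exp_le_exp.2 (neg_le_neg (hexp φ t ht))
    · rw [hχ_def, indicator_of_notMem hy, mul_zero]
      exact zero_le
  -- step A
  have hmeasIn : ∀ φ : ℝ, Measurable fun t : ℝ =>
      ENNReal.ofReal (f (x + t • dir φ) * Real.exp (-∫ s in (0:ℝ)..t, a (x + s • dir φ))) := by
    intro φ
    apply ENNReal.measurable_ofReal.comp
    apply Measurable.mul
    · exact (hcont.comp (continuous_const.add (continuous_id.smul continuous_const))).measurable
    · apply (Real.continuous_exp.comp ?_).measurable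
      apply Continuous.neg
      apply intervalIntegral.continuous_primitive ?_ 0
      intro b c
      rw [intervalIntegrable_iff]
      apply Measure.integrableOn_of_bounded (M := A)
      · rw [Set.uIoc]; exact measure_Ioc_lt_top.ne
      · exact (hameas.comp (measurable_const.add
          (measurable_id.smul_const (dir φ)))).aestronglyMeasurable
      · exact ae_of_all _ fun s => by
          rw [Real.norm_eq_abs]; exact hA.1 ⟨x + s • dir φ, rfl⟩
  have stepA : C * J ≤ Mop a f x := by
    have inner : ∀ φ : ℝ, C * ∫⁻ t in Ioi (0:ℝ), χ (x + t • dir φ) ≤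
        ∫⁻ t in Ioi (0:ℝ), ENNReal.ofReal
          (f (x + t • dir φ) * Real.exp (-∫ s in (0:ℝ)..t, a (x + s • dir φ))) := by
      intro φ
      rw [← lintegral_const_mul' C _ (hC_def ▸ ENNReal.ofReal_ne_top)]
      exact setLIntegral_mono (hmeasIn φ) (fun t ht => hpt φ t ht)
    unfold Mop
    rw [hJ_def, ← lintegral_const_mul' C _ (hC_def ▸ ENNReal.ofReal_ne_top)]
    exact lintegral_mono inner
  -- measurability of χ composed with the ray map
  have hχray : ∀ φ : ℝ, Measurable fun t : ℝ => χ (x + t • dir φ) := fun φ =>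
    hχmeas.comp (measurable_const.add (measurable_id.smul_const (dir φ)))
  -- step B : ofReal (π r²) ≤ ofReal d * J
  have stepB : ENNReal.ofReal (π * r ^ 2) ≤ ENNReal.ofReal d * J := by
    set g : ℝ × ℝ → ℝ≥0∞ := fun q => χ (x + Tmap q) with hg_def
    have hgmeas : Measurable g := hχmeas.comp (measurable_const.add Tmap_meas)
    have h1 : ENNReal.ofReal (π * r ^ 2) = ∫⁻ q, g q := by
      rw [← ball_vol z r hrpos.le, ← lintegral_indicator_one Metric.isOpen_ball.measurableSet]
      have hmp : MeasurePreserving (fun q : ℝ × ℝ => x + Tmap q) volume volume :=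
        (measurePreserving_add_left volume x).comp Tmap_mp
      exact (hmp.lintegral_comp hχmeas).symm
    have h2 : (∫⁻ q, g q) ≤
        ∫⁻ p in Ioi (0:ℝ) ×ˢ Ioc 0 (2*π), ENNReal.ofReal p.1 * g (polarCoord.symm p) :=
      lintegral_polar_le g
    have h3 : (∫⁻ p in Ioi (0:ℝ) ×ˢ Ioc 0 (2*π), ENNReal.ofReal p.1 * g (polarCoord.symm p)) =
        ∫⁻ φ in Ioc 0 (2*π), ∫⁻ t in Ioi (0:ℝ), ENNReal.ofReal t * χ (x + t • dir φ) := by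
      have hGmeas : Measurable fun p : ℝ × ℝ => ENNReal.ofReal p.1 * g (polarCoord.symm p) := by
        apply Measurable.mul
        · exact ENNReal.measurable_ofReal.comp measurable_fst
        · apply hgmeas.comp
          have : Continuous (⇑polarCoord.symm : ℝ × ℝ → ℝ × ℝ) :=
            (continuous_fst.mul (Real.continuous_cos.comp continuous_snd)).prodMk
              (continuous_fst.mul (Real.continuous_sin.comp continuous_snd))
          exact this.measurable
      rw [Measure.volume_eq_prod, ← Measure.prod_restrict,
        lintegral_prod_symm _ (hGmeas.aemeasurable)]
      apply lintegral_congr fun φ => lintegral_congr fun t => ?_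
      rw [hg_def]
      simp only []
      rw [Tmap_polar t φ]
    have h4 : (∫⁻ φ in Ioc 0 (2*π), ∫⁻ t in Ioi (0:ℝ), ENNReal.ofReal t * χ (x + t • dir φ)) ≤
        ENNReal.ofReal d * J := by
      have inner2 : ∀ φ : ℝ, (∫⁻ t in Ioi (0:ℝ), ENNReal.ofReal t * χ (x + t • dir φ)) ≤
          ENNReal.ofReal d * ∫⁻ t in Ioi (0:ℝ), χ (x + t • dir φ) := by
        intro φ
        rw [← lintegral_const_mul' _ _ ENNReal.ofReal_ne_top]
        apply setLIntegral_mono (measurable_const.mul (hχray φ))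
        intro t ht
        by_cases hy : x + t • dir φ ∈ Metric.ball z r
        · have htd : t ≤ d := by
            have hmem : x + t • dir φ ∈ K := hballK hy
            have := Metric.dist_le_diam_of_mem hK.isBounded hx hmem
            rwa [hdist φ t (le_of_lt ht), hd] at this
          exact mul_le_mul_left (ENNReal.ofReal_le_ofReal htd) _
        · rw [hχ_def, indicator_of_notMem hy, mul_zero]; exact zero_le
      rw [hJ_def, ← lintegral_const_mul' _ _ ENNReal.ofReal_ne_top]
      exact lintegral_mono inner2
    calc ENNReal.ofReal (π * r ^ 2) = ∫⁻ q, g q := h1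
      _ ≤ _ := h2
      _ = _ := h3
      _ ≤ ENNReal.ofReal d * J := h4
  -- step C: combine
  have hJge : ENNReal.ofReal (π * r ^ 2) / ENNReal.ofReal d ≤ J :=
    ENNReal.div_le_of_le_mul' stepB
  have hMge : ENNReal.ofReal (F/2 * Real.exp (-(d*A))) *
      (ENNReal.ofReal (π * r ^ 2) / ENNReal.ofReal d) ≤ Mop a f x := by
    refine le_trans ?_ stepA
    rw [hC_def]
    exact mul_le_mul_right hJge _
  refine le_trans ?_ hMge
  rw [← ENNReal.ofReal_div_of_pos hdpos, ← ENNReal.ofReal_mul (by positivity)]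
  apply ENNReal.ofReal_le_ofReal
  -- real arithmetic
  have hr2 : r ^ 2 = (F/Hα) ^ (2/α) / (2:ℝ) ^ (2/α) := by
    have e1 : r ^ (2:ℕ) = r ^ ((2:ℕ):ℝ) := (Real.rpow_natCast r 2).symm
    rw [e1, hr_def, ← Real.rpow_mul hbase.le]
    rw [show (1/α) * ((2:ℕ):ℝ) = 2/α by push_cast; ring]
    rw [show F/(2*Hα) = (F/Hα)/2 by ring]
    exact Real.div_rpow (by positivity) (by norm_num) _
  have h2pow : ((2:ℝ)) ^ (1 + 2/α) = 2 * (2:ℝ) ^ (2/α) := by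
    rw [Real.rpow_add (by norm_num : (0:ℝ) < 2), Real.rpow_one]
  have hE2 : (0:ℝ) < (2:ℝ) ^ (2/α) := Real.rpow_pos_of_pos (by norm_num) _
  rw [hr2, h2pow]
  have hQ : (0:ℝ) ≤ (F/Hα) ^ (2/α) := Real.rpow_nonneg (by positivity) _
  apply le_of_eq
  field_simp
end

section
/- Let K ⊂ ℝ² be compact with diam(K) ≤ d, d > 0. Let a : ℝ² → ℝ be measurable and bounded with a(y) = 0 for y ∉ K, and let g ∈ L²(ℝ²) with g(y) = 0 for y ∉ K. Then the function W(x) = |a(x)| ∫_{S¹} ∫₀^∞ |g(x+tθ)| exp(−∫₀^t a(x+sθ) ds) dt dθ belongs to L²(ℝ²) and ‖W‖_{L²(ℝ²)} ≤ 4π d e^{d‖a‖_∞} ‖a‖_∞ ‖g‖_{L²(ℝ²)}. -/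
open MeasureTheory Real Set
open scoped ENNReal

lemma continuous_dir : Continuous dir := by
  have h : Continuous fun φ => ![Real.cos φ, Real.sin φ] := by
    refine continuous_pi fun i => ?_
    fin_cases i
    · simpa using Real.continuous_cos
    · simpa using Real.continuous_sin
  exact (PiLp.continuous_toLp _ _).comp h

lemma abs_integral_le (K : Set (EuclideanSpace ℝ (Fin 2))) (hK : IsCompact K)
    (d : ℝ) (hd : Metric.diam K ≤ d) (hdpos : 0 < d)
    (a : EuclideanSpace ℝ (Fin 2) → ℝ) (hameas : Measurable a)
    (A : ℝ) (hA : IsLUB (Set.range fun y => |a y|) A)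
    (hasupp : ∀ y ∉ K, a y = 0)
    (x θ : EuclideanSpace ℝ (Fin 2)) (hθ : ‖θ‖ = 1) (t : ℝ) (ht : 0 < t) :
    |∫ s in (0:ℝ)..t, a (x + s • θ)| ≤ d * A := by
  have habs : ∀ y, |a y| ≤ A := fun y => hA.1 ⟨y, rfl⟩
  have hA0 : 0 ≤ A := le_trans (abs_nonneg _) (habs x)
  have hmap : Continuous fun s : ℝ => x + s • θ := by continuity
  set f : ℝ → ℝ := fun s => a (x + s • θ) with hf
  set T : Set ℝ := (fun s : ℝ => x + s • θ) ⁻¹' K with hT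
  have hTmeas : MeasurableSet T := (hK.isClosed.preimage hmap).measurableSet
  have hfeq : f = T.indicator f := by
    funext s
    by_cases h : s ∈ T
    · rw [Set.indicator_of_mem h]
    · rw [Set.indicator_of_notMem h]
      exact hasupp _ h
  have hμ : volume (Ioc 0 t ∩ T) ≤ ENNReal.ofReal d := by
    rcases (Ioc 0 t ∩ T).eq_empty_or_nonempty with h | h
    · simp [h]
    · set T' : Set ℝ := T ∩ Icc 0 t with hT'
      have hsub : Ioc 0 t ∩ T ⊆ T' := fun s hs => ⟨hs.2, Ioc_subset_Icc_self hs.1⟩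
      obtain ⟨s₁, hs₁⟩ := h
      have hT'ne : T'.Nonempty := ⟨s₁, hsub hs₁⟩
      have hT'c : IsClosed T' := (hK.isClosed.preimage hmap).inter isClosed_Icc
      have hbdd : BddBelow T' := ⟨0, fun s hs => hs.2.1⟩
      set s₀ := sInf T' with hs₀def
      have hs₀ : s₀ ∈ T' := hT'c.csInf_mem hT'ne hbdd
      have hsub2 : T' ⊆ Icc s₀ (s₀ + d) := by
        intro s hs
        refine ⟨csInf_le hbdd hs, ?_⟩
        have hdist : dist (x + s • θ) (x + s₀ • θ) ≤ d :=
          le_trans (Metric.dist_le_diam_of_mem hK.isBounded hs.1 hs₀.1) hd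
        have heq : dist (x + s • θ) (x + s₀ • θ) = |s - s₀| := by
          rw [dist_add_left, dist_eq_norm, ← sub_smul, norm_smul, hθ, mul_one,
            Real.norm_eq_abs]
        have := le_abs_self (s - s₀)
        rw [heq] at hdist
        linarith
      calc volume (Ioc 0 t ∩ T) ≤ volume (Icc s₀ (s₀ + d)) :=
            measure_mono (hsub.trans hsub2)
        _ = ENNReal.ofReal d := by rw [Real.volume_Icc]; ring_nf
  have hint : ∫ s in (0:ℝ)..t, f s = ∫ s in Ioc 0 t ∩ T, f s := by
    rw [intervalIntegral.integral_of_le ht.le]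
    conv_lhs => rw [hfeq]
    exact setIntegral_indicator hTmeas
  have hbound := norm_setIntegral_le_of_norm_le_const (μ := volume)
    (s := Ioc 0 t ∩ T) (f := f) (lt_of_le_of_lt hμ ENNReal.ofReal_lt_top)
    (fun s _ => by
      rw [Real.norm_eq_abs]; exact habs _)
  rw [hint]
  rw [Real.norm_eq_abs] at hbound
  have htr : (volume (Ioc 0 t ∩ T)).toReal ≤ d :=
    ENNReal.toReal_le_of_le_ofReal hdpos.le hμ
  calc |∫ s in Ioc 0 t ∩ T, f s| ≤ A * (volume (Ioc 0 t ∩ T)).toReal := hbound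
    _ ≤ A * d := by
        exact mul_le_mul_of_nonneg_left htr hA0
    _ = d * A := mul_comm _ _

theorem stmt8_meas (K : Set (EuclideanSpace ℝ (Fin 2))) (hK : IsCompact K)
    (d : ℝ) (hd : Metric.diam K ≤ d) (hdpos : 0 < d)
    (a : EuclideanSpace ℝ (Fin 2) → ℝ) (hameas : Measurable a)
    (A : ℝ) (hA : IsLUB (Set.range fun y => |a y|) A)
    (hasupp : ∀ y ∉ K, a y = 0)
    (g : EuclideanSpace ℝ (Fin 2) → ℝ) (hgmeas : Measurable g)
    (hgsupp : ∀ y ∉ K, g y = 0) :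
    (∫⁻ x,
        ((‖a x‖₊ : ℝ≥0∞) *
          ∫⁻ φ in Set.Ioc 0 (2 * π), ∫⁻ t in Set.Ioi (0 : ℝ),
            ENNReal.ofReal (|g (x + t • dir φ)| *
              Real.exp (-∫ s in (0:ℝ)..t, a (x + s • dir φ)))) ^ 2) ≤
      ENNReal.ofReal (4 * π * d * Real.exp (d * A) * A) ^ 2 *
        ∫⁻ x, (‖g x‖₊ : ℝ≥0∞) ^ 2 := by
  have habs : ∀ y, |a y| ≤ A := fun y => hA.1 ⟨y, rfl⟩
  have hA0 : 0 ≤ A := le_trans (abs_nonneg _) (habs 0)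
  set u : EuclideanSpace ℝ (Fin 2) → ℝ≥0∞ := fun y => (‖g y‖₊ : ℝ≥0∞) with hu
  have humeas : Measurable u := hgmeas.nnnorm.coe_nnreal_ennreal
  set w : ℝ → ℝ≥0∞ := fun t => (Set.Iic d).indicator (fun _ => 1) t with hw
  have hwmeas : Measurable w := measurable_const.indicator measurableSet_Iic
  have hwsq : ∀ t, w t ^ (2:ℝ) = w t := by
    intro t
    by_cases h : t ∈ Iic d <;> simp [hw, h]
  have hwne : ∀ t, w t ≠ ⊤ := by
    intro t
    by_cases h : t ∈ Iic d <;> simp [hw, h]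
  set F : EuclideanSpace ℝ (Fin 2) → ℝ≥0∞ := fun x =>
    ∫⁻ φ in Set.Ioc 0 (2 * π), ∫⁻ t in Set.Ioi (0:ℝ), w t * u (x + t • dir φ) with hF
  -- Step A
  have stepA : ∀ x, (‖a x‖₊ : ℝ≥0∞) *
      (∫⁻ φ in Set.Ioc 0 (2 * π), ∫⁻ t in Set.Ioi (0:ℝ),
        ENNReal.ofReal (|g (x + t • dir φ)| *
          Real.exp (-∫ s in (0:ℝ)..t, a (x + s • dir φ)))) ≤
      ENNReal.ofReal (A * Real.exp (d * A)) * F x := by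
    intro x
    by_cases hax : a x = 0
    · simp [hax]
    · have hxK : x ∈ K := by by_contra h; exact hax (hasupp x h)
      have key : ∀ φ : ℝ, (∫⁻ t in Set.Ioi (0:ℝ),
          ENNReal.ofReal (|g (x + t • dir φ)| *
            Real.exp (-∫ s in (0:ℝ)..t, a (x + s • dir φ)))) ≤
          ENNReal.ofReal (Real.exp (d * A)) *
            ∫⁻ t in Set.Ioi (0:ℝ), w t * u (x + t • dir φ) := by
        intro φ
        rw [← lintegral_const_mul' _ _ ENNReal.ofReal_ne_top]
        refine lintegral_mono_ae ((ae_restrict_iff' measurableSet_Ioi).2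
          (Filter.Eventually.of_forall fun t ht => ?_))
        by_cases hg0 : g (x + t • dir φ) = 0
        · simp [hg0]
        · have hyK : x + t • dir φ ∈ K := by by_contra h; exact hg0 (hgsupp _ h)
          have htd : t ≤ d := by
            have h1 : dist (x + t • dir φ) x ≤ d :=
              le_trans (Metric.dist_le_diam_of_mem hK.isBounded hyK hxK) hd
            have h2 : dist (x + t • dir φ) x = |t| := by
              rw [dist_eq_norm, add_sub_cancel_left, norm_smul, norm_dir, mul_one,
                Real.norm_eq_abs]
            have := le_abs_self t
            rw [h2] at h1
            linarith
          have hw1 : w t = 1 := by simp [hw, htd]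
          rw [hw1, one_mul]
          simp only [hu, ← enorm_eq_nnnorm, Real.enorm_eq_ofReal_abs]
          rw [← ENNReal.ofReal_mul (Real.exp_nonneg _)]
          refine ENNReal.ofReal_le_ofReal ?_
          have hIb := abs_integral_le K hK d hd hdpos a hameas A hA hasupp x (dir φ)
            (norm_dir φ) t ht
          have hexp : Real.exp (-∫ s in (0:ℝ)..t, a (x + s • dir φ)) ≤ Real.exp (d * A) :=
            Real.exp_le_exp.2 (le_trans (neg_le_abs _) hIb)
          calc |g (x + t • dir φ)| * Real.exp (-∫ s in (0:ℝ)..t, a (x + s • dir φ))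
              ≤ |g (x + t • dir φ)| * Real.exp (d * A) :=
                mul_le_mul_of_nonneg_left hexp (abs_nonneg _)
            _ = Real.exp (d * A) * |g (x + t • dir φ)| := mul_comm _ _
      calc (‖a x‖₊ : ℝ≥0∞) * _ ≤ ENNReal.ofReal A *
          (ENNReal.ofReal (Real.exp (d * A)) * F x) := by
            refine mul_le_mul' ?_ ?_
            · rw [← enorm_eq_nnnorm, Real.enorm_eq_ofReal_abs]
              exact ENNReal.ofReal_le_ofReal (habs x)
            · calc (∫⁻ φ in Set.Ioc 0 (2 * π), ∫⁻ t in Set.Ioi (0:ℝ),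
                  ENNReal.ofReal (|g (x + t • dir φ)| *
                    Real.exp (-∫ s in (0:ℝ)..t, a (x + s • dir φ))))
                  ≤ ∫⁻ φ in Set.Ioc 0 (2 * π), ENNReal.ofReal (Real.exp (d * A)) *
                      ∫⁻ t in Set.Ioi (0:ℝ), w t * u (x + t • dir φ) :=
                    lintegral_mono fun φ => key φ
                _ = ENNReal.ofReal (Real.exp (d * A)) * F x :=
                    lintegral_const_mul' _ _ ENNReal.ofReal_ne_top
        _ = ENNReal.ofReal (A * Real.exp (d * A)) * F x := by
            rw [ENNReal.ofReal_mul hA0, mul_assoc]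
  -- product measure setup
  set ρ : Measure (ℝ × ℝ) :=
    (volume.restrict (Set.Ioc 0 (2 * π))).prod (volume.restrict (Set.Ioi (0:ℝ))) with hρ
  have hHmeas : Measurable fun q : EuclideanSpace ℝ (Fin 2) × ℝ × ℝ =>
      w q.2.2 * u (q.1 + q.2.2 • dir q.2.1) := by
    refine (hwmeas.comp (measurable_snd.comp measurable_snd)).mul ?_
    refine humeas.comp (Continuous.measurable ?_)
    exact continuous_fst.add ((continuous_snd.comp continuous_snd).smul
      (continuous_dir.comp (continuous_fst.comp continuous_snd)))
  have hslice : ∀ x : EuclideanSpace ℝ (Fin 2),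
      Measurable fun p : ℝ × ℝ => w p.2 * u (x + p.2 • dir p.1) :=
    fun x => hHmeas.comp measurable_prodMk_left
  have hF_prod : ∀ x, F x = ∫⁻ p, w p.2 * u (x + p.2 • dir p.1) ∂ρ := fun x =>
    (lintegral_prod _ (hslice x).aemeasurable).symm
  have hCw : (∫⁻ p, w p.2 ∂ρ) = ENNReal.ofReal (2 * π) * ENNReal.ofReal d := by
    rw [hρ, lintegral_prod (fun p => w p.2) (hwmeas.comp measurable_snd).aemeasurable]
    have hinner : (∫⁻ t in Set.Ioi (0:ℝ), w t) = ENNReal.ofReal d := by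
      rw [hw, lintegral_indicator measurableSet_Iic, setLIntegral_one,
        Measure.restrict_apply measurableSet_Iic]
      have : Set.Iic d ∩ Set.Ioi (0:ℝ) = Set.Ioc 0 d := by
        ext s; simp [and_comm]
      rw [this, Real.volume_Ioc]
      norm_num
    simp only [hinner]
    rw [setLIntegral_const, Real.volume_Ioc, mul_comm]
    norm_num
  -- Cauchy-Schwarz
  have h2 : (2:ℝ).HolderConjugate 2 := Real.HolderConjugate.two_two
  have hCS : ∀ x, (F x)^2 ≤ (∫⁻ p, w p.2 ∂ρ) *
      ∫⁻ p, w p.2 * u (x + p.2 • dir p.1) ^ 2 ∂ρ := by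
    intro x
    have hf : AEMeasurable (fun p : ℝ × ℝ => w p.2) ρ :=
      (hwmeas.comp measurable_snd).aemeasurable
    have hgm : AEMeasurable (fun p : ℝ × ℝ => w p.2 * u (x + p.2 • dir p.1)) ρ :=
      (hslice x).aemeasurable
    have hH := ENNReal.lintegral_mul_le_Lp_mul_Lq ρ h2 hf hgm
    have hlhs : (∫⁻ p, ((fun p : ℝ × ℝ => w p.2) * fun p : ℝ × ℝ => w p.2 * u (x + p.2 • dir p.1)) p ∂ρ)
        = F x := by
      have hww : ∀ t : ℝ, w t * w t = w t := by
        intro t; by_cases h : t ∈ Iic d <;> simp [hw, h]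
      rw [hF_prod x]
      refine lintegral_congr fun p => ?_
      simp only [Pi.mul_apply]
      rw [← mul_assoc, hww]
    have hfsq : (∫⁻ p, (fun p : ℝ × ℝ => w p.2) p ^ (2:ℝ) ∂ρ) = ∫⁻ p, w p.2 ∂ρ :=
      lintegral_congr fun p => hwsq p.2
    have hgsq : (∫⁻ p, (fun p : ℝ × ℝ => w p.2 * u (x + p.2 • dir p.1)) p ^ (2:ℝ) ∂ρ)
        = ∫⁻ p, w p.2 * u (x + p.2 • dir p.1) ^ 2 ∂ρ := by
      refine lintegral_congr fun p => ?_
      rw [ENNReal.mul_rpow_of_nonneg _ _ (by norm_num : (0:ℝ) ≤ 2), hwsq]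
      congr 1
      rw [← ENNReal.rpow_natCast]
      norm_num
    rw [hlhs, hfsq, hgsq] at hH
    calc (F x)^2 ≤ ((∫⁻ p, w p.2 ∂ρ) ^ (1/(2:ℝ)) *
          (∫⁻ p, w p.2 * u (x + p.2 • dir p.1) ^ 2 ∂ρ) ^ (1/(2:ℝ)))^2 :=
        pow_le_pow_left' hH 2
      _ = (∫⁻ p, w p.2 ∂ρ) * ∫⁻ p, w p.2 * u (x + p.2 • dir p.1) ^ 2 ∂ρ := by
        rw [mul_pow, ← ENNReal.rpow_natCast ((∫⁻ p, w p.2 ∂ρ) ^ (1/(2:ℝ))),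
          ← ENNReal.rpow_natCast ((∫⁻ p, w p.2 * u (x + p.2 • dir p.1) ^ 2 ∂ρ) ^ (1/(2:ℝ))),
          ← ENNReal.rpow_mul, ← ENNReal.rpow_mul]
        norm_num
  -- measurability for swap
  have hH2meas : Measurable fun q : EuclideanSpace ℝ (Fin 2) × ℝ × ℝ =>
      w q.2.2 * u (q.1 + q.2.2 • dir q.2.1) ^ 2 := by
    refine (hwmeas.comp (measurable_snd.comp measurable_snd)).mul ?_
    refine Measurable.pow_const ?_ 2
    refine humeas.comp (Continuous.measurable ?_)
    exact continuous_fst.add ((continuous_snd.comp continuous_snd).smul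
      (continuous_dir.comp (continuous_fst.comp continuous_snd)))
  have htrans : ∀ p : ℝ × ℝ, (∫⁻ x, u (x + p.2 • dir p.1) ^ 2) = ∫⁻ y, u y ^ 2 :=
    fun p => lintegral_add_right_eq_self (fun y => u y ^ 2) _
  have hCwne : (∫⁻ p, w p.2 ∂ρ) ≠ ⊤ := by
    rw [hCw]; exact ENNReal.mul_ne_top ENNReal.ofReal_ne_top ENNReal.ofReal_ne_top
  have stepB : (∫⁻ x, (F x)^2) ≤
      (ENNReal.ofReal (2*π) * ENNReal.ofReal d)^2 * ∫⁻ y, u y ^ 2 := by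
    have h1 : (∫⁻ x, (F x)^2) ≤
        ∫⁻ x, (∫⁻ p, w p.2 ∂ρ) * ∫⁻ p, w p.2 * u (x + p.2 • dir p.1) ^ 2 ∂ρ :=
      lintegral_mono hCS
    rw [lintegral_const_mul' _ _ hCwne] at h1
    rw [lintegral_lintegral_swap hH2meas.aemeasurable] at h1
    have h3 : (∫⁻ p, ∫⁻ x, w p.2 * u (x + p.2 • dir p.1) ^ 2 ∂volume ∂ρ)
        = (∫⁻ p, w p.2 ∂ρ) * ∫⁻ y, u y ^ 2 := by
      have : ∀ p : ℝ × ℝ, (∫⁻ x, w p.2 * u (x + p.2 • dir p.1) ^ 2 ∂volume)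
          = w p.2 * ∫⁻ y, u y ^ 2 := by
        intro p
        rw [lintegral_const_mul' _ _ (hwne p.2), htrans p]
      simp only [this]
      exact lintegral_mul_const'' _ (hwmeas.comp measurable_snd).aemeasurable
    rw [h3, ← mul_assoc, hCw] at h1
    calc (∫⁻ x, (F x)^2) ≤ _ := h1
      _ = (ENNReal.ofReal (2*π) * ENNReal.ofReal d)^2 * ∫⁻ y, u y ^ 2 := by ring
  -- combine
  calc (∫⁻ x, ((‖a x‖₊ : ℝ≥0∞) *
        ∫⁻ φ in Set.Ioc 0 (2 * π), ∫⁻ t in Set.Ioi (0:ℝ),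
          ENNReal.ofReal (|g (x + t • dir φ)| *
            Real.exp (-∫ s in (0:ℝ)..t, a (x + s • dir φ)))) ^ 2)
      ≤ ∫⁻ x, (ENNReal.ofReal (A * Real.exp (d * A)) * F x)^2 :=
        lintegral_mono fun x => pow_le_pow_left' (stepA x) 2
    _ = ENNReal.ofReal (A * Real.exp (d * A))^2 * ∫⁻ x, (F x)^2 := by
        simp_rw [mul_pow]
        exact lintegral_const_mul' _ _ (ENNReal.pow_ne_top ENNReal.ofReal_ne_top)
    _ ≤ ENNReal.ofReal (A * Real.exp (d * A))^2 *
        ((ENNReal.ofReal (2*π) * ENNReal.ofReal d)^2 * ∫⁻ y, u y ^ 2) := by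
        gcongr
    _ = (ENNReal.ofReal (A * Real.exp (d * A)) *
        (ENNReal.ofReal (2*π) * ENNReal.ofReal d))^2 * ∫⁻ y, u y ^ 2 := by
        rw [← mul_assoc, ← mul_pow]
    _ ≤ ENNReal.ofReal (4 * π * d * Real.exp (d * A) * A) ^ 2 * ∫⁻ x, u x ^ 2 := by
        gcongr
        rw [← ENNReal.ofReal_mul (by positivity : (0:ℝ) ≤ 2*π),
          ← ENNReal.ofReal_mul (by positivity : (0:ℝ) ≤ A * Real.exp (d*A))]
        refine ENNReal.ofReal_le_ofReal ?_
        have hprod : 0 ≤ π * d * Real.exp (d*A) * A := by positivity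
        nlinarith [hprod]

/-- For compact `K` with `diam K ≤ d`, `a` bounded measurable supported in `K` with
`A = ‖a‖_∞`, and `g ∈ L²` supported in `K`, the function
`W(x) = |a(x)| ∫_{S¹} ∫₀^∞ |g(x+tθ)| exp(−∫₀^t a(x+sθ) ds) dt dθ`
is in `L²(ℝ²)` with `‖W‖_{L²} ≤ 4 π d e^{d‖a‖_∞} ‖a‖_∞ ‖g‖_{L²}`, expressed here via
lower Lebesgue integrals: `∫ W² ≤ (4 π d e^{dA} A)² ∫ |g|²`. -/
theorem stmt8 (K : Set (EuclideanSpace ℝ (Fin 2))) (hK : IsCompact K)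
    (d : ℝ) (hd : Metric.diam K ≤ d) (hdpos : 0 < d)
    (a : EuclideanSpace ℝ (Fin 2) → ℝ) (hameas : Measurable a)
    -- `A = ‖a‖_∞`, in particular `a` is bounded
    (A : ℝ) (hA : IsLUB (Set.range fun y => |a y|) A)
    (hasupp : ∀ y ∉ K, a y = 0)
    (g : EuclideanSpace ℝ (Fin 2) → ℝ) (hg : MemLp g 2 volume)
    (hgsupp : ∀ y ∉ K, g y = 0) :
    (∫⁻ x,
        ((‖a x‖₊ : ℝ≥0∞) *
          ∫⁻ φ in Set.Ioc 0 (2 * π), ∫⁻ t in Set.Ioi (0 : ℝ),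
            ENNReal.ofReal (|g (x + t • dir φ)| *
              Real.exp (-∫ s in (0:ℝ)..t, a (x + s • dir φ)))) ^ 2) ≤
      ENNReal.ofReal (4 * π * d * Real.exp (d * A) * A) ^ 2 *
        ∫⁻ x, (‖g x‖₊ : ℝ≥0∞) ^ 2 := by
  obtain ⟨g₀, hg₀meas, hgeq⟩ : ∃ g₀, Measurable g₀ ∧ g =ᵐ[volume] g₀ := by
    have h := hg.aestronglyMeasurable.aemeasurable
    exact ⟨h.mk g, h.measurable_mk, h.ae_eq_mk⟩
  set g' := K.indicator g₀ with hg'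
  have hg'meas : Measurable g' := hg₀meas.indicator hK.measurableSet
  have hg'supp : ∀ y ∉ K, g' y = 0 := fun y hy => Set.indicator_of_notMem hy _
  have hgg' : g =ᵐ[volume] g' := by
    filter_upwards [hgeq] with y hy
    by_cases hyK : y ∈ K
    · rw [hg', Set.indicator_of_mem hyK, hy]
    · rw [hg', Set.indicator_of_notMem hyK, hgsupp y hyK]
  have hRHS : (∫⁻ x, (‖g x‖₊ : ℝ≥0∞) ^ 2) = ∫⁻ x, (‖g' x‖₊ : ℝ≥0∞) ^ 2 :=
    lintegral_congr_ae (hgg'.mono fun y hy => by simp only [hy])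
  have hnull : volume {y | ¬ g y = g' y} = 0 := ae_iff.1 hgg'
  obtain ⟨N, hNsub, hNmeas, hN0⟩ := exists_measurable_superset_of_null hnull
  have hcont : Continuous fun q : (ℝ × ℝ) × EuclideanSpace ℝ (Fin 2) =>
      q.2 + q.1.2 • dir q.1.1 :=
    continuous_snd.add ((continuous_snd.comp continuous_fst).smul
      (continuous_dir.comp (continuous_fst.comp continuous_fst)))
  set S : Set ((ℝ × ℝ) × EuclideanSpace ℝ (Fin 2)) :=
    (fun q : (ℝ × ℝ) × EuclideanSpace ℝ (Fin 2) => q.2 + q.1.2 • dir q.1.1) ⁻¹' N with hS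
  have hSmeas : MeasurableSet S := hcont.measurable hNmeas
  have hS0 : ((volume : Measure (ℝ × ℝ)).prod
      (volume : Measure (EuclideanSpace ℝ (Fin 2)))) S = 0 := by
    rw [Measure.prod_apply hSmeas]
    have hfib : ∀ p : ℝ × ℝ,
        volume ((Prod.mk p ⁻¹' S) : Set (EuclideanSpace ℝ (Fin 2))) = 0 := by
      intro p
      have heq : Prod.mk p ⁻¹' S = (fun x => x + p.2 • dir p.1) ⁻¹' N := rfl
      rw [heq, measure_preimage_add_right, hN0]
    simp [hfib]
  have hS'0 : ((volume : Measure (EuclideanSpace ℝ (Fin 2))).prod (volume : Measure (ℝ × ℝ)))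
      {q : EuclideanSpace ℝ (Fin 2) × ℝ × ℝ | q.1 + q.2.2 • dir q.2.1 ∈ N} = 0 := by
    have hswapeq : {q : EuclideanSpace ℝ (Fin 2) × ℝ × ℝ | q.1 + q.2.2 • dir q.2.1 ∈ N}
        = Prod.swap ⁻¹' S := rfl
    rw [hswapeq]
    calc ((volume : Measure (EuclideanSpace ℝ (Fin 2))).prod (volume : Measure (ℝ × ℝ)))
          (Prod.swap ⁻¹' S)
        = (((volume : Measure (EuclideanSpace ℝ (Fin 2))).prod
            (volume : Measure (ℝ × ℝ))).map Prod.swap) S :=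
          (Measure.map_apply measurable_swap hSmeas).symm
      _ = ((volume : Measure (ℝ × ℝ)).prod
            (volume : Measure (EuclideanSpace ℝ (Fin 2)))) S := by rw [Measure.prod_swap]
      _ = 0 := hS0
  have hae : ∀ᵐ q ∂((volume : Measure (EuclideanSpace ℝ (Fin 2))).prod
      (volume : Measure (ℝ × ℝ))),
      g (q.1 + q.2.2 • dir q.2.1) = g' (q.1 + q.2.2 • dir q.2.1) := by
    rw [ae_iff]
    refine measure_mono_null ?_ hS'0
    intro q hq
    exact hNsub hq
  have h1 := Measure.ae_ae_of_ae_prod hae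
  have hLHS : (∫⁻ x,
        ((‖a x‖₊ : ℝ≥0∞) *
          ∫⁻ φ in Set.Ioc 0 (2 * π), ∫⁻ t in Set.Ioi (0 : ℝ),
            ENNReal.ofReal (|g (x + t • dir φ)| *
              Real.exp (-∫ s in (0:ℝ)..t, a (x + s • dir φ)))) ^ 2)
      = ∫⁻ x,
        ((‖a x‖₊ : ℝ≥0∞) *
          ∫⁻ φ in Set.Ioc 0 (2 * π), ∫⁻ t in Set.Ioi (0 : ℝ),
            ENNReal.ofReal (|g' (x + t • dir φ)| *
              Real.exp (-∫ s in (0:ℝ)..t, a (x + s • dir φ)))) ^ 2 := by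
    refine lintegral_congr_ae ?_
    filter_upwards [h1] with x hx
    have hx2 : ∀ᵐ φ : ℝ ∂volume, ∀ᵐ t : ℝ ∂volume,
        g (x + t • dir φ) = g' (x + t • dir φ) := by
      rw [Measure.volume_eq_prod] at hx
      exact Measure.ae_ae_of_ae_prod hx
    congr 2
    refine lintegral_congr_ae (ae_restrict_of_ae ?_)
    filter_upwards [hx2] with φ hφ
    refine lintegral_congr_ae (ae_restrict_of_ae ?_)
    filter_upwards [hφ] with t ht
    rw [ht]
  rw [hLHS, hRHS]
  exact stmt8_meas K hK d hd hdpos a hameas A hA hasupp g' hg'meas hg'supp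
end
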